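/- There exists a unique real number b ∈ (0,1) with 2·log b = 3(b−1); moreover this b satisfies 0.41718 < b < 0.41719. -/

import Mathlib

open Real Finset

lemma exp_ub : Real.exp (87423/100000) < 100000/41718 := by
  have h := Real.exp_bound' (x := 87423/100000) (by norm_num) (by norm_num) (n := 9) (by norm_num)
  refine h.trans_lt ?_
  simp only [Finset.sum_range_succ, Finset.sum_range_zero, Nat.factorial]
  norm_num

lemma exp_lb : (100000:ℝ)/41719 < Real.exp (874215/1000000) := by
  have h := Real.exp_bound (x := 874215/1000000) (by rw [abs_of_pos] <;> norm_num) (n := 9) (by norm_num)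
  rw [abs_sub_le_iff] at h
  have h2 := h.2
  rw [abs_of_pos (by norm_num : (0:ℝ) < 874215/1000000)] at h2
  have : (∑ m ∈ Finset.range 9, ((874215:ℝ)/1000000) ^ m / m.factorial)
      - ((874215:ℝ)/1000000) ^ 9 * (Nat.succ 9 / ((Nat.factorial 9) * 9)) ≤ Real.exp (874215/1000000) := by
    linarith
  refine lt_of_lt_of_le ?_ this
  simp only [Finset.sum_range_succ, Finset.sum_range_zero, Nat.factorial, Nat.succ_eq_add_one]
  norm_num

lemma num1 : 2 * Real.log 0.41718 < 3 * (0.41718 - 1) := by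
  have h : Real.log 0.41718 < -(87423/100000) := by
    rw [Real.log_lt_iff_lt_exp (by norm_num), Real.exp_neg]
    rw [lt_inv_comm₀ (by norm_num) (Real.exp_pos _)]
    calc Real.exp (87423/100000) < 100000/41718 := exp_ub
      _ = ((0.41718:ℝ))⁻¹ := by norm_num
  nlinarith

lemma num2 : 3 * (0.41719 - 1) < 2 * Real.log 0.41719 := by
  have h : -(874215/1000000) < Real.log 0.41719 := by
    rw [Real.lt_log_iff_exp_lt (by norm_num), Real.exp_neg]
    rw [inv_lt_comm₀ (Real.exp_pos _) (by norm_num)]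
    calc ((0.41719:ℝ))⁻¹ = 100000/41719 := by norm_num
      _ < Real.exp (874215/1000000) := exp_lb
  nlinarith

/-- There is a unique `b ∈ (0,1)` with `2 log b = 3(b−1)`, and it satisfies
`0.41718 < b < 0.41719`. -/
theorem threshold_b_exists_unique :
    (∃! b : ℝ, b ∈ Set.Ioo (0 : ℝ) 1 ∧ 2 * Real.log b = 3 * (b - 1)) ∧
      ∀ b : ℝ, b ∈ Set.Ioo (0 : ℝ) 1 → 2 * Real.log b = 3 * (b - 1) →
        0.41718 < b ∧ b < 0.41719 := by
  -- uniqueness: no two distinct roots in (0,1)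
  have uniq : ∀ a b : ℝ, a ∈ Set.Ioo (0:ℝ) 1 → 2 * Real.log a = 3 * (a - 1) →
      b ∈ Set.Ioo (0:ℝ) 1 → 2 * Real.log b = 3 * (b - 1) → a < b → False := by
    intro a b ha hfa hb hfb hab
    obtain ⟨ha0, ha1⟩ := ha
    obtain ⟨hb0, hb1⟩ := hb
    have h1a : (0:ℝ) < 1 - a := by linarith
    have htpos : 0 < (1 - b) / (1 - a) := div_pos (by linarith) h1a
    have hspos : 0 < (b - a) / (1 - a) := div_pos (by linarith) h1a
    have hts : (1 - b) / (1 - a) + (b - a) / (1 - a) = 1 := by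
      field_simp
      ring
    have hcomb : ((1 - b) / (1 - a)) • a + ((b - a) / (1 - a)) • (1:ℝ) = b := by
      rw [smul_eq_mul, smul_eq_mul]
      field_simp
      ring
    have key := strictConcaveOn_log_Ioi.2 (Set.mem_Ioi.2 ha0) (Set.mem_Ioi.2 one_pos)
      (ne_of_lt ha1) htpos hspos hts
    rw [hcomb, Real.log_one] at key
    have hla : Real.log a = 3/2 * (a - 1) := by linarith
    have hlb : Real.log b = 3/2 * (b - 1) := by linarith
    rw [hla, hlb, smul_eq_mul, smul_eq_mul, mul_zero, add_zero,
      div_mul_eq_mul_div, div_lt_iff₀ h1a] at key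
    nlinarith
  -- existence via IVT
  have hlogc : ContinuousOn Real.log (Set.Icc (0.41718:ℝ) 0.41719) :=
    Real.continuousOn_log.mono (fun x hx => by
      simp only [Set.mem_compl_iff, Set.mem_singleton_iff]
      intro h
      rw [h] at hx
      exact absurd hx.1 (by norm_num))
  have hcont : ContinuousOn (fun x : ℝ => 2 * Real.log x - 3 * (x - 1)) (Set.Icc 0.41718 0.41719) :=
    ((continuousOn_const.mul hlogc).sub (by fun_prop))
  have hivt := intermediate_value_Ioo (by norm_num : (0.41718:ℝ) ≤ 0.41719) hcont
  have hmem : (0:ℝ) ∈ Set.Ioo (2 * Real.log 0.41718 - 3 * (0.41718 - 1))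
      (2 * Real.log 0.41719 - 3 * (0.41719 - 1)) := by
    constructor
    · have := num1; linarith
    · have := num2; linarith
  obtain ⟨b, hbmem, hbeq⟩ := hivt hmem
  have hbI : b ∈ Set.Ioo (0:ℝ) 1 := ⟨by have := hbmem.1; norm_num at this ⊢; linarith,
    by have := hbmem.2; norm_num at this ⊢; linarith⟩
  have hbroot : 2 * Real.log b = 3 * (b - 1) := by
    have : 2 * Real.log b - 3 * (b - 1) = 0 := hbeq
    linarith
  refine ⟨⟨b, ⟨hbI, hbroot⟩, ?_⟩, ?_⟩
  · rintro c ⟨hcI, hcroot⟩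
    rcases lt_trichotomy c b with h | h | h
    · exact absurd (uniq c b hcI hcroot hbI hbroot h) (fun x => x)
    · exact h
    · exact absurd (uniq b c hbI hbroot hcI hcroot h) (fun x => x)
  · intro c hcI hcroot
    have hc : c = b := by
      rcases lt_trichotomy c b with h | h | h
      · exact absurd (uniq c b hcI hcroot hbI hbroot h) (fun x => x)
      · exact h
      · exact absurd (uniq b c hbI hbroot hcI hcroot h) (fun x => x)
    rw [hc]
    exact hbmem
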